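/- For x, y ∈ (0,1) with x ≠ y, the directional derivative of F(x,y) = (1/(x-y))·((1+y-x)·h(y)/y - (1+x-y)·h(x)/x) along the diagonal direction (1,1) equals (g(x)-g(y))/(x-y) + g(x) + g(y), where g(x) = (h(x) - x·h'(x))/x². -/

import Mathlib

noncomputable def binH (x : ℝ) : ℝ := -x * Real.log x - (1 - x) * Real.log (1 - x)

noncomputable def Fdef (x y : ℝ) : ℝ :=
  (1 / (x - y)) * ((1 + y - x) * binH y / y - (1 + x - y) * binH x / x)

noncomputable def gdef (x : ℝ) : ℝ :=
  (binH x - x * (Real.log (1 - x) - Real.log x)) / x^2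

lemma binH_hasDeriv {u : ℝ} (h0 : 0 < u) (h1 : u < 1) :
    HasDerivAt binH (Real.log (1 - u) - Real.log u) u := by
  have hu : u ≠ 0 := ne_of_gt h0
  have hu1 : (1 : ℝ) - u ≠ 0 := by linarith
  have d1 : HasDerivAt (fun x : ℝ => x * Real.log x) (Real.log u + 1) u := by
    have := (hasDerivAt_id u).mul (Real.hasDerivAt_log hu)
    exact this.congr_deriv (by simp [hu])
  have d2 : HasDerivAt (fun x : ℝ => (1 - x) * Real.log (1 - x))
      (-(Real.log (1 - u) + 1)) u := by
    have dsub : HasDerivAt (fun x : ℝ => 1 - x) (-1) u := by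
      exact ((hasDerivAt_const u (1:ℝ)).sub (hasDerivAt_id u)).congr_deriv (by norm_num)
    have dlog : HasDerivAt (fun x : ℝ => Real.log (1 - x)) (-1 * (1 - u)⁻¹) u := by
      exact ((Real.hasDerivAt_log hu1).comp u dsub).congr_deriv (by ring)
    have := dsub.mul dlog
    exact this.congr_deriv (by have := mul_inv_cancel₀ hu1; linear_combination (-1:ℝ) * this)
  have : HasDerivAt binH (-(Real.log u + 1) - (-(Real.log (1 - u) + 1))) u := by
    have h := (d1.neg).sub d2
    have : (fun x : ℝ => -(x * Real.log x) - (1 - x) * Real.log (1 - x)) = binH := by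
      funext v; simp [binH]
    rw [← this]
    exact h
  convert this using 1
  ring

lemma phi_hasDeriv {u : ℝ} (h0 : 0 < u) (h1 : u < 1) :
    HasDerivAt (fun v => binH v / v) (-gdef u) u := by
  have hu : u ≠ 0 := ne_of_gt h0
  have := (binH_hasDeriv h0 h1).div (hasDerivAt_id u) hu
  refine this.congr_deriv ?_
  simp only [gdef, id_eq]
  field_simp
  ring

theorem stmt14 (x y : ℝ) (hx : x ∈ Set.Ioo (0:ℝ) 1) (hy : y ∈ Set.Ioo (0:ℝ) 1)
    (hxy : x ≠ y) :
    deriv (fun t : ℝ => Fdef (x + t) (y + t)) 0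
      = (gdef x - gdef y) / (x - y) + gdef x + gdef y := by
  obtain ⟨hx0, hx1⟩ := hx
  obtain ⟨hy0, hy1⟩ := hy
  have hc : x - y ≠ 0 := sub_ne_zero.mpr hxy
  have key : (fun t : ℝ => Fdef (x + t) (y + t))
      = fun t : ℝ => (1 / (x - y)) *
        ((1 + y - x) * (binH (y + t) / (y + t)) - (1 + x - y) * (binH (x + t) / (x + t))) := by
    funext t
    simp only [Fdef]
    have e1 : x + t - (y + t) = x - y := by ring
    have e2 : 1 + (y + t) - (x + t) = 1 + y - x := by ring
    have e3 : 1 + (x + t) - (y + t) = 1 + x - y := by ring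
    rw [e1, e2, e3]
    ring
  rw [key]
  have hdy : HasDerivAt (fun t : ℝ => binH (y + t) / (y + t)) (-gdef y) 0 := by
    have hadd : HasDerivAt (fun t : ℝ => y + t) 1 0 := by
      simpa using (hasDerivAt_id (0:ℝ)).const_add y
    have hp := phi_hasDeriv hy0 hy1
    rw [show y = y + 0 by ring] at hp
    have := hp.comp 0 hadd
    simp only [add_zero, mul_one] at this; exact this
  have hdx : HasDerivAt (fun t : ℝ => binH (x + t) / (x + t)) (-gdef x) 0 := by
    have hadd : HasDerivAt (fun t : ℝ => x + t) 1 0 := by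
      simpa using (hasDerivAt_id (0:ℝ)).const_add x
    have hp := phi_hasDeriv hx0 hx1
    rw [show x = x + 0 by ring] at hp
    have := hp.comp 0 hadd
    simp only [add_zero, mul_one] at this; exact this
  have hD : HasDerivAt (fun t : ℝ => (1 / (x - y)) *
      ((1 + y - x) * (binH (y + t) / (y + t)) - (1 + x - y) * (binH (x + t) / (x + t))))
      ((1 / (x - y)) * ((1 + y - x) * (-gdef y) - (1 + x - y) * (-gdef x))) 0 :=
    ((hdy.const_mul (1 + y - x)).sub (hdx.const_mul (1 + x - y))).const_mul _
  rw [hD.deriv]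
  field_simp
  ring
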